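/- With the notation of the context, for every particle array v ∈ Z^{T·M} and every index path k ∈ {1,…,M}^T one has G_θ(v^{(𝟏)}) · Φ_{θ,ϑ}(v) · b^{ref}_{θ,ϑ}(k | v) = G_θ((s_{1,k}(v))^{(𝟏)}) · Φ_{θ,ϑ}(s_{1,k}(v)) · b^{ref}_{θ,ϑ}(k | s_{1,k}(v)); that is, the joint density of a target-distributed path together with importance-sampled companion particles, multiplied by the refreshment selection probability, is invariant under swapping the conditioned path v^{(𝟏)} with the selected path v^{(k)}. -/

import Mathlib

open MeasureTheory Finset

namespace MHAARRB9

variable {Z : Type*}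

/-- The path `v^{(k)}` extracted from the particle array `v`. -/
def pathOf (n m : ℕ) (v : Fin (n + 1) → Fin (m + 1) → Z)
    (k : Fin (n + 1) → Fin (m + 1)) : Fin (n + 1) → Z := fun t => v t (k t)

/-- The constant index path `𝟏`. -/
def onePath (n m : ℕ) : Fin (n + 1) → Fin (m + 1) := fun _ => 0

/-- The swap operator `s_{1,k}`. -/
def swapArr (n m : ℕ) (k : Fin (n + 1) → Fin (m + 1))
    (v : Fin (n + 1) → Fin (m + 1) → Z) : Fin (n + 1) → Fin (m + 1) → Z :=
  fun t i => v t (Equiv.swap 0 (k t) i)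

/-- `G_θ(z) = ∏_t γ_{t,θ}(z_t)`. -/
noncomputable def G (n : ℕ) (γ : Fin (n + 1) → Z → ℝ) (z : Fin (n + 1) → Z) : ℝ :=
  ∏ t, γ t (z t)

/-- The proposal density `Φ_{θ,ϑ}(v) = ∏_t ∏_{i≥2} q_{t,θ,ϑ}(v_t^{(i)})`. -/
noncomputable def Phi (n m : ℕ) (qp : Fin (n + 1) → Z → ℝ)
    (v : Fin (n + 1) → Fin (m + 1) → Z) : ℝ :=
  ∏ t, ∏ i ∈ univ.erase (0 : Fin (m + 1)), qp t (v t i)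

/-- The refreshment selection probabilities `b^{ref}_{θ,ϑ}(k|v)`. -/
noncomputable def bRef (n m : ℕ) (γ qp : Fin (n + 1) → Z → ℝ)
    (k : Fin (n + 1) → Fin (m + 1)) (v : Fin (n + 1) → Fin (m + 1) → Z) : ℝ :=
  ∏ t, (γ t (v t (k t)) / qp t (v t (k t))) / (∑ i, γ t (v t i) / qp t (v t i))

lemma key_swap {m : ℕ} (γ q : Z → ℝ) (hγ : ∀ z, 0 < γ z) (hq : ∀ z, 0 < q z)
    (f : Fin (m + 1) → Z) (c : Fin (m + 1)) :
    γ (f 0) * (∏ i ∈ univ.erase (0 : Fin (m + 1)), q (f i)) *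
      ((γ (f c) / q (f c)) / ∑ i, γ (f i) / q (f i))
    = γ (f (Equiv.swap 0 c 0)) *
        (∏ i ∈ univ.erase (0 : Fin (m + 1)), q (f (Equiv.swap 0 c i))) *
      ((γ (f (Equiv.swap 0 c c)) / q (f (Equiv.swap 0 c c))) /
        ∑ i, γ (f (Equiv.swap 0 c i)) / q (f (Equiv.swap 0 c i))) := by
  have hsum : (∑ i, γ (f (Equiv.swap 0 c i)) / q (f (Equiv.swap 0 c i)))
      = ∑ i, γ (f i) / q (f i) :=
    Equiv.sum_comp (Equiv.swap 0 c) (fun i => γ (f i) / q (f i))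
  rw [hsum, Equiv.swap_apply_left, Equiv.swap_apply_right]
  have hS : 0 < ∑ i, γ (f i) / q (f i) :=
    Finset.sum_pos (fun i _ => div_pos (hγ _) (hq _)) ⟨0, mem_univ _⟩
  have h1 := Finset.mul_prod_erase univ (fun i => q (f (Equiv.swap 0 c i)))
    (mem_univ (0 : Fin (m + 1)))
  have h2 := Finset.mul_prod_erase univ (fun i => q (f i)) (mem_univ (0 : Fin (m + 1)))
  have h3 : ∏ i, q (f (Equiv.swap 0 c i)) = ∏ i, q (f i) :=
    Equiv.prod_comp (Equiv.swap 0 c) (fun i => q (f i))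
  simp only [Equiv.swap_apply_left] at h1
  have hP : q (f c) * (∏ i ∈ univ.erase (0 : Fin (m + 1)), q (f (Equiv.swap 0 c i)))
      = q (f 0) * ∏ i ∈ univ.erase (0 : Fin (m + 1)), q (f i) := by
    rw [h1, h3, h2]
  have hq0 : q (f 0) ≠ 0 := (hq _).ne'
  have hqc : q (f c) ≠ 0 := (hq _).ne'
  have hA' : (∏ i ∈ univ.erase (0 : Fin (m + 1)), q (f (Equiv.swap 0 c i)))
      = q (f 0) * (∏ i ∈ univ.erase (0 : Fin (m + 1)), q (f i)) / q (f c) := by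
    rw [eq_div_iff hqc]
    linear_combination hP
  rw [hA']
  field_simp

/-- For every particle array `v` and index path `k`,
`G_θ(v^{(𝟏)}) Φ_{θ,ϑ}(v) b^{ref}_{θ,ϑ}(k|v)
  = G_θ((s_{1,k}(v))^{(𝟏)}) Φ_{θ,ϑ}(s_{1,k}(v)) b^{ref}_{θ,ϑ}(k|s_{1,k}(v))`. -/
theorem refreshment_swap_invariance
    [MeasurableSpace Z] (n m : ℕ)
    (γθ qp : Fin (n + 1) → Z → ℝ)
    (hγθm : ∀ t, Measurable (γθ t)) (hqpm : ∀ t, Measurable (qp t))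
    (hγθ : ∀ t z, 0 < γθ t z) (hqp : ∀ t z, 0 < qp t z)
    (v : Fin (n + 1) → Fin (m + 1) → Z) (k : Fin (n + 1) → Fin (m + 1)) :
    G n γθ (pathOf n m v (onePath n m)) * Phi n m qp v * bRef n m γθ qp k v
      = G n γθ (pathOf n m (swapArr n m k v) (onePath n m)) *
          Phi n m qp (swapArr n m k v) * bRef n m γθ qp k (swapArr n m k v) := by
  unfold G Phi bRef pathOf onePath swapArr
  rw [← Finset.prod_mul_distrib, ← Finset.prod_mul_distrib, ← Finset.prod_mul_distrib,
    ← Finset.prod_mul_distrib]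
  exact Finset.prod_congr rfl fun t _ =>
    key_swap (γθ t) (qp t) (hγθ t) (hqp t) (v t) (k t)

end MHAARRB9
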